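/- arXiv:1305.6242 — 3 statements merged into one kernel-verified Lean document; each statement's English description precedes it below -/
import Mathlib

section
/- Let k be a field of characteristic 0, b ∈ k with b ≠ 0, and c₁,…,c₆ ∈ k. Set g(t) = 1 + Σ_{i=1}^{6} cᵢtⁱ and G(X₁,X₂,X₃,t) = X₁³ - bX₂³ + b²X₃³ + 3bX₁X₂X₃ - g(t). Let u ∈ k with u ≠ 0 and 54b²u³ + 5c₁³ - 18c₁c₂ + 27c₃ ≠ 0, and define p = (3c₂ - c₁²)/9, q = c₁/3, r = (-27b²u³ + 5c₁³ - 18c₁c₂ + 27c₃)/(81bu), s = u(27b²c₁u³ - 5c₁⁴ + 27c₂c₁² - 27c₃c₁ - 27c₂² + 81c₄)/(3(54b²u³ + 5c₁³ - 18c₁c₂ + 27c₃)). Then the polynomial T ↦ G(pT² + qT + 1, rT², sT² + uT, T) ∈ k[T] is divisible by T⁵ (its coefficients of T⁰, T¹, T², T³, T⁴ all vanish). -/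
open Polynomial

set_option maxHeartbeats 2000000 in
theorem stmt_5 (k : Type*) [Field k] [CharZero k] (b : k) (hb : b ≠ 0)
    (c₁ c₂ c₃ c₄ c₅ c₆ : k) (u : k) (hu : u ≠ 0)
    (hden : 54 * b ^ 2 * u ^ 3 + 5 * c₁ ^ 3 - 18 * c₁ * c₂ + 27 * c₃ ≠ 0)
    (p q r s : k)
    (hp : p = (3 * c₂ - c₁ ^ 2) / 9)
    (hq : q = c₁ / 3)
    (hr : r = (-27 * b ^ 2 * u ^ 3 + 5 * c₁ ^ 3 - 18 * c₁ * c₂ + 27 * c₃) /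
      (81 * b * u))
    (hs : s = u * (27 * b ^ 2 * c₁ * u ^ 3 - 5 * c₁ ^ 4 + 27 * c₂ * c₁ ^ 2
        - 27 * c₃ * c₁ - 27 * c₂ ^ 2 + 81 * c₄) /
      (3 * (54 * b ^ 2 * u ^ 3 + 5 * c₁ ^ 3 - 18 * c₁ * c₂ + 27 * c₃)))
    (P : k[X])
    (hP : P = (C p * X ^ 2 + C q * X + 1) ^ 3
        - C b * (C r * X ^ 2) ^ 3
        + C b ^ 2 * (C s * X ^ 2 + C u * X) ^ 3
        + 3 * C b * (C p * X ^ 2 + C q * X + 1) * (C r * X ^ 2)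
            * (C s * X ^ 2 + C u * X)
        - (1 + C c₁ * X + C c₂ * X ^ 2 + C c₃ * X ^ 3 + C c₄ * X ^ 4
            + C c₅ * X ^ 5 + C c₆ * X ^ 6)) :
    ∀ i : ℕ, i < 5 → P.coeff i = 0 := by
  have hP' : P = C (3 * q - c₁) * X + C (3 * p + 3 * q ^ 2 - c₂) * X ^ 2
      + C (6 * p * q + q ^ 3 + u ^ 3 * b ^ 2 + 3 * r * u * b - c₃) * X ^ 3
      + C (3 * p ^ 2 + 3 * p * q ^ 2 + 3 * s * u ^ 2 * b ^ 2 + 3 * q * r * u * b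
          + 3 * r * s * b - c₄) * X ^ 4
      + C (3 * p ^ 2 * q + 3 * s ^ 2 * u * b ^ 2 + 3 * p * r * u * b
          + 3 * q * r * s * b - c₅) * X ^ 5
      + C (p ^ 3 - r ^ 3 * b + s ^ 3 * b ^ 2 + 3 * p * r * s * b - c₆) * X ^ 6 := by
    rw [hP]
    simp only [C_add, C_sub, C_mul, C_pow, map_ofNat, C_1]
    ring
  intro i hi
  have h9 : (9 : k) ≠ 0 := by norm_num
  have h3 : (3 : k) ≠ 0 := by norm_num
  have hbu : 81 * b * u ≠ 0 := by
    simp [hb, hu]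
  have hden3 : 3 * (54 * b ^ 2 * u ^ 3 + 5 * c₁ ^ 3 - 18 * c₁ * c₂ + 27 * c₃) ≠ 0 :=
    mul_ne_zero h3 hden
  subst hp hq hr hs
  have hden' : u ^ 3 * b ^ 2 * 54 + c₁ ^ 3 * 5 - c₂ * c₁ * 18 + 27 * c₃ ≠ 0 := by
    contrapose! hden; linear_combination hden
  interval_cases i <;>
    simp only [hP', coeff_add, coeff_C_mul, coeff_X_pow, coeff_X, coeff_zero,
      Nat.zero_eq, OfNat.ofNat_ne_one, OfNat.one_ne_ofNat, if_true, if_false] <;>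
    norm_num <;>
    field_simp <;>
    ring
end

section
/- Let k be a field of characteristic 0, let b, a₀, a₁, a₂ ∈ k with b ≠ 0 and a₁ ≠ 0, and let m be a positive integer. For any u ∈ k with u ≠ 0, set t = -(27b²u⁶ + 27ba₀u³ - a₂³)/(27ba₁u³), X₁ = tᵐ, X₂ = u, X₃ = a₂/(3bu). Then X₁³ - bX₂³ + b²X₃³ + 3bX₁X₂X₃ = t^{3m} + a₂tᵐ + a₁t + a₀. -/
theorem stmt_7 (k : Type*) [Field k] [CharZero k] (b a₀ a₁ a₂ : k)
    (hb : b ≠ 0) (ha₁ : a₁ ≠ 0) (m : ℕ) (hm : 0 < m)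
    (u : k) (hu : u ≠ 0)
    (t X₁ X₂ X₃ : k)
    (ht : t = -(27 * b ^ 2 * u ^ 6 + 27 * b * a₀ * u ^ 3 - a₂ ^ 3) /
      (27 * b * a₁ * u ^ 3))
    (hX₁ : X₁ = t ^ m) (hX₂ : X₂ = u) (hX₃ : X₃ = a₂ / (3 * b * u)) :
    X₁ ^ 3 - b * X₂ ^ 3 + b ^ 2 * X₃ ^ 3 + 3 * b * X₁ * X₂ * X₃ =
      t ^ (3 * m) + a₂ * t ^ m + a₁ * t + a₀ := by
  have key : a₁ * t + a₀ = -(b * u ^ 3) + a₂ ^ 3 / (27 * b * u ^ 3) := by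
    rw [ht]; field_simp; ring
  rw [hX₁, hX₂, hX₃, mul_comm 3 m, pow_mul]
  have h : b ^ 2 * (a₂ / (3 * b * u)) ^ 3 = a₂ ^ 3 / (27 * b * u ^ 3) := by
    field_simp; ring
  have h2 : 3 * b * t ^ m * u * (a₂ / (3 * b * u)) = a₂ * t ^ m := by
    field_simp
  rw [h, h2]; linear_combination -key
end

section
/- Let k be a field of characteristic 0 and a, b, a₄ ∈ k with a ≠ 0. For any u ∈ k with u² ≠ 3(4a³ + 27b²), define X₂ = 4a·a₄·u / (3(4a³ + 27b²) - u²) and X₃ = a₄(12a³ + 81b² + 18bu + u²) / (a(3(4a³ + 27b²) - u²)). Then (2a²X₃ - 9bX₂)² = 4a²a₄² + 3(4a³ + 27b²)X₂². -/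
theorem stmt_8 (k : Type*) [Field k] [CharZero k] (a b a₄ : k) (ha : a ≠ 0)
    (u : k) (hu : u ^ 2 ≠ 3 * (4 * a ^ 3 + 27 * b ^ 2))
    (X₂ X₃ : k)
    (hX₂ : X₂ = 4 * a * a₄ * u / (3 * (4 * a ^ 3 + 27 * b ^ 2) - u ^ 2))
    (hX₃ : X₃ = a₄ * (12 * a ^ 3 + 81 * b ^ 2 + 18 * b * u + u ^ 2) /
      (a * (3 * (4 * a ^ 3 + 27 * b ^ 2) - u ^ 2))) :
    (2 * a ^ 2 * X₃ - 9 * b * X₂) ^ 2 =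
      4 * a ^ 2 * a₄ ^ 2 + 3 * (4 * a ^ 3 + 27 * b ^ 2) * X₂ ^ 2 := by
  have hd : 3 * (4 * a ^ 3 + 27 * b ^ 2) - u ^ 2 ≠ 0 := by
    intro h; apply hu; linear_combination -h
  subst hX₂ hX₃
  have hd' : 3 * (a ^ 3 * 4 + b ^ 2 * 27) - u ^ 2 ≠ 0 := by
    intro h; apply hd; linear_combination h
  field_simp
  ring
end
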